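/- Let π = (π_h)_{h=1}^H be a deterministic policy, let β^π be defined by the backward recursion with the true kernels T, O, and let β̂ be defined by the same backward recursion with the kernels T̂, Ô and the additional term sgn(γ)·b_h(s_h, a_h), i.e. β̂_{H+1}(s; f_{H+1}) := 1 and β̂_h(s_h; f_h) := exp(γ·r_h(s_h, a_h)) · ∑_{s'∈S} T̂_{h,a_h}(s'|s_h) · ∑_{o'∈O} Ô_{h+1}(o'|s') · β̂_{h+1}(s'; (f_h, a_h, o')) + sgn(γ)·b_h(s_h, a_h) with a_h = π_h(f_h). Assume that for every h ∈ {1,…,H}, every observable history f_h and every s_h ∈ S (with a_h = π_h(f_h)): |∑_{s'∈S} ∑_{o'∈O} (T̂_{h,a_h}(s'|s_h)·Ô_{h+1}(o'|s') − T_{h,a_h}(s'|s_h)·O_{h+1}(o'|s')) · exp(γ·r_h(s_h, a_h)) · β^π_{h+1}(s'; (f_h, a_h, o'))| ≤ b_h(s_h, a_h). Then: if γ > 0, β̂_h(s; f_h) ≥ β^π_h(s; f_h) for all h, f_h, s; and if γ < 0, β̂_h(s; f_h) ≤ β^π_h(s; f_h) for all h, f_h, s. -/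

import Mathlib

open Finset

noncomputable section

variable {S O A : Type*}

/-- Truncation of a sequence: keep the first `n` values, fill the rest with junk. -/
def truncSeq {X : Type*} [Nonempty X] (f : ℕ → X) (n : ℕ) : ℕ → X :=
  fun t => if t < n then f t else Classical.arbitrary X

/-- The action chosen by the policy `π` at step `m` given the observable history
recorded in `acts` (indices `< m`) and `obs` (indices `< m`). -/
def polAct [Nonempty A] [Nonempty O] (π : ℕ → (ℕ → A) → (ℕ → O) → A)
    (acts : ℕ → A) (obs : ℕ → O) (m : ℕ) : A :=
  π m (truncSeq acts m) (truncSeq obs m)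

/-- Beta vectors defined by the Markovian backward recursion with kernels `Ttr`, `Oem`
and an additional bonus term `sgn(γ)·b_h(s_h,a_h)` (first argument: number of steps
remaining; second argument: current step index `m = h - 1`).  Taking `bon = 0` gives
the true beta vectors `β^π`. -/
def betaRecB [Fintype S] [Fintype O] [Nonempty A] [Nonempty O]
    (γ : ℝ) (rew : ℕ → S → A → ℝ) (Ttr : ℕ → A → S → S → ℝ) (Oem : ℕ → O → S → ℝ)
    (bon : ℕ → S → A → ℝ) (π : ℕ → (ℕ → A) → (ℕ → O) → A) :
    ℕ → ℕ → (ℕ → A) → (ℕ → O) → S → ℝ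
  | 0, _, _, _, _ => 1
  | k + 1, m, acts, obs, s =>
      Real.exp (γ * rew m s (polAct π acts obs m)) *
        (∑ s' : S, Ttr m (polAct π acts obs m) s s' *
          ∑ o' : O, Oem m o' s' *
            betaRecB γ rew Ttr Oem bon π k (m + 1)
              (Function.update acts m (polAct π acts obs m))
              (Function.update obs m o') s') +
        Real.sign γ * bon m s (polAct π acts obs m)

/-- Optimism: if the bonus `b_h` dominates the one-step statistical error of the
empirical kernels `T̂, Ô` against the true kernels `T, O` (measured on the true beta
vectors), then the empirical beta vectors `β̂` (built from `T̂, Ô` with the bonus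
`sgn(γ)·b_h`) over-estimate `β^π` when `γ > 0` and under-estimate it when `γ < 0`. -/
theorem betaRec_optimism
    [Fintype S] [Fintype O] [Fintype A] [Nonempty S] [Nonempty O] [Nonempty A]
    (H : ℕ) (hH : 1 ≤ H) (γ : ℝ) (hγ : γ ≠ 0)
    (Ttr : ℕ → A → S → S → ℝ) (Oem : ℕ → O → S → ℝ)
    (Thad : ℕ → A → S → S → ℝ) (Ohad : ℕ → O → S → ℝ)
    (rew : ℕ → S → A → ℝ) (bon : ℕ → S → A → ℝ)
    (hT0 : ∀ h, h < H → ∀ a s s', 0 ≤ Ttr h a s s')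
    (hT1 : ∀ h, h < H → ∀ a s, ∑ s', Ttr h a s s' = 1)
    (hO0 : ∀ t, t < H → ∀ o s, 0 ≤ Oem t o s)
    (hO1 : ∀ t, t < H → ∀ s, ∑ o, Oem t o s = 1)
    (hThad0 : ∀ h, h < H → ∀ a s s', 0 ≤ Thad h a s s')
    (hOhad0 : ∀ t, t < H → ∀ o s, 0 ≤ Ohad t o s)
    (hbon0 : ∀ h, h < H → ∀ s a, 0 ≤ bon h s a)
    (hr : ∀ h, h < H → ∀ s a, rew h s a ∈ Set.Icc (0 : ℝ) 1)
    (π : ℕ → (ℕ → A) → (ℕ → O) → A)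
    (hconc : ∀ m, m < H → ∀ (acts : ℕ → A) (obs : ℕ → O) (s : S),
      |∑ s' : S, ∑ o' : O,
          (Thad m (polAct π acts obs m) s s' * Ohad m o' s' -
            Ttr m (polAct π acts obs m) s s' * Oem m o' s') *
            Real.exp (γ * rew m s (polAct π acts obs m)) *
            betaRecB γ rew Ttr Oem (fun _ _ _ => 0) π (H - (m + 1)) (m + 1)
              (Function.update acts m (polAct π acts obs m))
              (Function.update obs m o') s'| ≤ bon m s (polAct π acts obs m)) :
    (0 < γ → ∀ m, m ≤ H → ∀ (acts : ℕ → A) (obs : ℕ → O) (s : S),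
        betaRecB γ rew Ttr Oem (fun _ _ _ => 0) π (H - m) m acts obs s ≤
          betaRecB γ rew Thad Ohad bon π (H - m) m acts obs s) ∧
    (γ < 0 → ∀ m, m ≤ H → ∀ (acts : ℕ → A) (obs : ℕ → O) (s : S),
        betaRecB γ rew Thad Ohad bon π (H - m) m acts obs s ≤
          betaRecB γ rew Ttr Oem (fun _ _ _ => 0) π (H - m) m acts obs s) := by

  suffices h : ∀ k m, H = m + k →
      (0 < γ → ∀ (acts : ℕ → A) (obs : ℕ → O) (s : S),
        betaRecB γ rew Ttr Oem (fun _ _ _ => 0) π k m acts obs s ≤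
          betaRecB γ rew Thad Ohad bon π k m acts obs s) ∧
      (γ < 0 → ∀ (acts : ℕ → A) (obs : ℕ → O) (s : S),
        betaRecB γ rew Thad Ohad bon π k m acts obs s ≤
          betaRecB γ rew Ttr Oem (fun _ _ _ => 0) π k m acts obs s) by
    constructor
    · intro hpos m hm acts obs s
      exact (h (H - m) m (by omega)).1 hpos acts obs s
    · intro hneg m hm acts obs s
      exact (h (H - m) m (by omega)).2 hneg acts obs s
  intro k
  induction k with
  | zero =>
      intro m hm
      constructor <;> intro _ acts obs s <;> simp [betaRecB]
  | succ k ih =>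
      intro m hm
      have hmH : m < H := by omega
      have ihm := ih (m + 1) (by omega)
      have hk : H - (m + 1) = k := by omega
      constructor
      · intro hpos acts obs s
        have hsign : Real.sign γ = 1 := Real.sign_of_pos hpos
        simp only [betaRecB, hsign, mul_zero, add_zero, one_mul]
        set a := polAct π acts obs m with ha
        set E := Real.exp (γ * rew m s a) with hE
        set Bt : S → O → ℝ := fun s' o' =>
          betaRecB γ rew Ttr Oem (fun _ _ _ => 0) π k (m + 1)
            (Function.update acts m a) (Function.update obs m o') s' with hBt
        set Bh : S → O → ℝ := fun s' o' =>
          betaRecB γ rew Thad Ohad bon π k (m + 1)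
            (Function.update acts m a) (Function.update obs m o') s' with hBh
        have hc := hconc m hmH acts obs s
        rw [hk] at hc
        have key : E * (∑ s' : S, Thad m a s s' * ∑ o' : O, Ohad m o' s' * Bt s' o') -
            E * (∑ s' : S, Ttr m a s s' * ∑ o' : O, Oem m o' s' * Bt s' o') =
            ∑ s' : S, ∑ o' : O,
              (Thad m a s s' * Ohad m o' s' - Ttr m a s s' * Oem m o' s') * E * Bt s' o' := by
          simp only [Finset.mul_sum, ← Finset.sum_sub_distrib]
          refine Finset.sum_congr rfl fun s' _ => Finset.sum_congr rfl fun o' _ => by ring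
        have habs := abs_le.1 hc
        have step1 : E * (∑ s' : S, Ttr m a s s' * ∑ o' : O, Oem m o' s' * Bt s' o') ≤
            E * (∑ s' : S, Thad m a s s' * ∑ o' : O, Ohad m o' s' * Bt s' o') + bon m s a := by
          linarith [habs.1, key.ge, key.le]
        refine step1.trans ?_
        apply add_le_add_left
        apply mul_le_mul_of_nonneg_left _ (Real.exp_pos _).le
        refine Finset.sum_le_sum fun s' _ => ?_
        apply mul_le_mul_of_nonneg_left _ (hThad0 m hmH a s s')
        refine Finset.sum_le_sum fun o' _ => ?_
        exact mul_le_mul_of_nonneg_left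
          (ihm.1 hpos (Function.update acts m a) (Function.update obs m o') s')
          (hOhad0 m hmH o' s')
      · intro hneg acts obs s
        have hsign : Real.sign γ = -1 := Real.sign_of_neg hneg
        simp only [betaRecB, hsign, mul_zero, add_zero, neg_one_mul]
        set a := polAct π acts obs m with ha
        set E := Real.exp (γ * rew m s a) with hE
        set Bt : S → O → ℝ := fun s' o' =>
          betaRecB γ rew Ttr Oem (fun _ _ _ => 0) π k (m + 1)
            (Function.update acts m a) (Function.update obs m o') s' with hBt
        set Bh : S → O → ℝ := fun s' o' =>
          betaRecB γ rew Thad Ohad bon π k (m + 1)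
            (Function.update acts m a) (Function.update obs m o') s' with hBh
        have hc := hconc m hmH acts obs s
        rw [hk] at hc
        have key : E * (∑ s' : S, Thad m a s s' * ∑ o' : O, Ohad m o' s' * Bt s' o') -
            E * (∑ s' : S, Ttr m a s s' * ∑ o' : O, Oem m o' s' * Bt s' o') =
            ∑ s' : S, ∑ o' : O,
              (Thad m a s s' * Ohad m o' s' - Ttr m a s s' * Oem m o' s') * E * Bt s' o' := by
          simp only [Finset.mul_sum, ← Finset.sum_sub_distrib]
          refine Finset.sum_congr rfl fun s' _ => Finset.sum_congr rfl fun o' _ => by ring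
        have habs := abs_le.1 hc
        have step2 : E * (∑ s' : S, Thad m a s s' * ∑ o' : O, Ohad m o' s' * Bt s' o') -
            bon m s a ≤ E * (∑ s' : S, Ttr m a s s' * ∑ o' : O, Oem m o' s' * Bt s' o') := by
          linarith [habs.2, key.ge, key.le]
        refine le_trans ?_ step2
        apply add_le_add_left
        apply mul_le_mul_of_nonneg_left _ (Real.exp_pos _).le
        refine Finset.sum_le_sum fun s' _ => ?_
        apply mul_le_mul_of_nonneg_left _ (hThad0 m hmH a s s')
        refine Finset.sum_le_sum fun o' _ => ?_
        exact mul_le_mul_of_nonneg_left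
          (ihm.2 hneg (Function.update acts m a) (Function.update obs m o') s')
          (hOhad0 m hmH o' s')

end
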